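/- arXiv:2104.00904 — 2 statements merged into one kernel-verified Lean document; each statement's English description precedes it below -/
import Mathlib

section
/- Let K : ℝ^N → [0,∞) be integrable, even (K(−z) = K(z) for all z), and with finite second moment ∫_{ℝ^N} ‖z‖² K(z) dz < ∞. For ε > 0 set K_ε(z) := ε^{−(N+2)} K(z/ε) and m_ε := ∫_{ℝ^N} K_ε(z) dz. Let u : ℝ^N → ℝ be twice continuously differentiable and bounded, with bounded and uniformly continuous second derivative. Then for every x ∈ ℝ^N, lim_{ε→0⁺} [ ∫_{ℝ^N} K_ε(x−y) u(y) dy − m_ε u(x) ] = Σ_{i,j=1}^N d_{ij} ∂²u/∂x_i∂x_j (x), where d_{ij} := (1/2) ∫_{ℝ^N} z_i z_j K(z) dz. -/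
set_option maxHeartbeats 1000000

open MeasureTheory Filter Topology Metric

section taylor
variable {E : Type*} [NormedAddCommGroup E] [NormedSpace ℝ E]

lemma taylor2_bound {u : E → ℝ} (hu : ContDiff ℝ 2 u) (x h : E) (C : ℝ)
    (hC : ∀ y ∈ closedBall x ‖h‖,
      ‖fderiv ℝ (fderiv ℝ u) y - fderiv ℝ (fderiv ℝ u) x‖ ≤ C) :
    |u (x + h) - u x - fderiv ℝ u x h - fderiv ℝ (fderiv ℝ u) x h h / 2|
      ≤ C * ‖h‖ ^ 2 := by
  set H := fderiv ℝ (fderiv ℝ u) x with hH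
  have hdu : Differentiable ℝ u := hu.differentiable (by norm_num)
  have hdu1 : ContDiff ℝ 1 (fderiv ℝ u) := hu.fderiv_right (by norm_num)
  have hddu : Differentiable ℝ (fderiv ℝ u) := hdu1.differentiable (by norm_num)
  -- Step 1: first-order bound on fderiv u
  have step1 : ∀ y ∈ closedBall x ‖h‖,
      ‖fderiv ℝ u y - fderiv ℝ u x - H (y - x)‖ ≤ C * ‖y - x‖ := by
    intro y hy
    exact Convex.norm_image_sub_le_of_norm_hasFDerivWithin_le'
      (fun z hz => (hddu z).hasFDerivAt.hasFDerivWithinAt)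
      hC (convex_closedBall x ‖h‖) (mem_closedBall_self (norm_nonneg h)) hy
  -- Step 2: 1D auxiliary function
  set θ : ℝ → ℝ := fun t => u (x + t • h) - t * (fderiv ℝ u x h) - t ^ 2 * (H h h) / 2 with hθ
  have hde : ∀ t : ℝ, HasDerivAt θ
      (fderiv ℝ u (x + t • h) h - fderiv ℝ u x h - t * (H h h)) t := by
    intro t
    have h1 : HasDerivAt (fun t : ℝ => x + t • h) h t := by
      simpa using ((hasDerivAt_id t).smul_const h).const_add x
    have h2 : HasDerivAt (fun t : ℝ => u (x + t • h)) (fderiv ℝ u (x + t • h) h) t :=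
      (hdu (x + t • h)).hasFDerivAt.comp_hasDerivAt t h1
    have h3 : HasDerivAt (fun t : ℝ => t * (fderiv ℝ u x h)) (fderiv ℝ u x h) t := by
      simpa using (hasDerivAt_id t).mul_const (fderiv ℝ u x h)
    have h4 : HasDerivAt (fun t : ℝ => t ^ 2 * (H h h) / 2) (t * (H h h)) t := by
      have := ((hasDerivAt_pow 2 t).mul_const (H h h)).div_const 2
      refine this.congr_deriv ?_
      ring
    exact (h2.sub h3).sub h4
  have hbound : ∀ t ∈ Set.Icc (0:ℝ) 1,
      ‖fderiv ℝ u (x + t • h) h - fderiv ℝ u x h - t * (H h h)‖ ≤ C * ‖h‖ ^ 2 := by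
    intro t ht
    have hmem : x + t • h ∈ closedBall x ‖h‖ := by
      simp only [mem_closedBall, dist_eq_norm, add_sub_cancel_left, norm_smul, Real.norm_eq_abs]
      calc |t| * ‖h‖ ≤ 1 * ‖h‖ := by
            apply mul_le_mul_of_nonneg_right _ (norm_nonneg h)
            rw [abs_le]; constructor <;> linarith [ht.1, ht.2]
        _ = ‖h‖ := one_mul _
    have := step1 (x + t • h) hmem
    rw [add_sub_cancel_left] at this
    have h5 : fderiv ℝ u (x + t • h) h - fderiv ℝ u x h - t * (H h h)
        = (fderiv ℝ u (x + t • h) - fderiv ℝ u x - H (t • h)) h := by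
      simp only [ContinuousLinearMap.sub_apply, ContinuousLinearMap.map_smul,
        ContinuousLinearMap.smul_apply, smul_eq_mul]
    rw [h5]
    calc ‖(fderiv ℝ u (x + t • h) - fderiv ℝ u x - H (t • h)) h‖
        ≤ ‖fderiv ℝ u (x + t • h) - fderiv ℝ u x - H (t • h)‖ * ‖h‖ :=
          ContinuousLinearMap.le_opNorm _ _
      _ ≤ (C * ‖t • h‖) * ‖h‖ := by
          apply mul_le_mul_of_nonneg_right _ (norm_nonneg h)
          simpa using this
      _ ≤ (C * ‖h‖) * ‖h‖ := by
          apply mul_le_mul_of_nonneg_right _ (norm_nonneg h)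
          apply mul_le_mul_of_nonneg_left _ ?_
          · rw [norm_smul, Real.norm_eq_abs]
            calc |t| * ‖h‖ ≤ 1 * ‖h‖ := by
                  apply mul_le_mul_of_nonneg_right _ (norm_nonneg h)
                  rw [abs_le]; constructor <;> linarith [ht.1, ht.2]
              _ = ‖h‖ := one_mul _
          · have h0 := hC x (mem_closedBall_self (norm_nonneg h))
            simp only [← hH, sub_self, norm_zero] at h0
            exact le_trans (ContinuousLinearMap.opNorm_nonneg _) h0
      _ = C * ‖h‖ ^ 2 := by ring
  have key : ‖θ 1 - θ 0‖ ≤ C * ‖h‖ ^ 2 * ‖(1:ℝ) - 0‖ :=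
    Convex.norm_image_sub_le_of_norm_hasDerivWithin_le
      (fun t ht => (hde t).hasDerivWithinAt) hbound (convex_Icc 0 1)
      (Set.mem_Icc.2 ⟨le_rfl, zero_le_one⟩) (Set.mem_Icc.2 ⟨zero_le_one, le_rfl⟩)
  have e1 : θ 1 - θ 0 = u (x + h) - u x - fderiv ℝ u x h - H h h / 2 := by
    simp only [hθ, one_smul, zero_smul, add_zero]
    ring
  rw [e1] at key
  simpa using key

end taylor

section seconddiff
variable {E : Type*} [NormedAddCommGroup E] [NormedSpace ℝ E]

lemma seconddiff_bound {u : E → ℝ} (hu : ContDiff ℝ 2 u) (x h : E) (C : ℝ)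
    (hC : ∀ y ∈ closedBall x ‖h‖,
      ‖fderiv ℝ (fderiv ℝ u) y - fderiv ℝ (fderiv ℝ u) x‖ ≤ C) :
    |u (x + h) + u (x - h) - 2 * u x - fderiv ℝ (fderiv ℝ u) x h h|
      ≤ 2 * C * ‖h‖ ^ 2 := by
  set H := fderiv ℝ (fderiv ℝ u) x with hH
  have t1 := taylor2_bound hu x h C hC
  have hC' : ∀ y ∈ closedBall x ‖-h‖, ‖fderiv ℝ (fderiv ℝ u) y - H‖ ≤ C := by
    simpa [norm_neg] using hC
  have t2 := taylor2_bound hu x (-h) C hC'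
  have e2 : u (x + -h) - u x - fderiv ℝ u x (-h) - H (-h) (-h) / 2
      = u (x - h) - u x + fderiv ℝ u x h - H h h / 2 := by
    simp [sub_eq_add_neg, map_neg, ContinuousLinearMap.neg_apply]
  rw [e2, norm_neg] at t2
  have habs := abs_add_le (u (x + h) - u x - fderiv ℝ u x h - H h h / 2)
    (u (x - h) - u x + fderiv ℝ u x h - H h h / 2)
  calc |u (x + h) + u (x - h) - 2 * u x - H h h|
      = |(u (x + h) - u x - fderiv ℝ u x h - H h h / 2)
          + (u (x - h) - u x + fderiv ℝ u x h - H h h / 2)| := by ring_nf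
    _ ≤ |u (x + h) - u x - fderiv ℝ u x h - H h h / 2|
          + |u (x - h) - u x + fderiv ℝ u x h - H h h / 2| := habs
    _ ≤ C * ‖h‖ ^ 2 + C * ‖h‖ ^ 2 := add_le_add t1 t2
    _ = 2 * C * ‖h‖ ^ 2 := by ring

end seconddiff

open EuclideanSpace

/-- Focusing kernel limit of the homogeneous nonlocal diffusion operator. -/
theorem stmt_1 {N : ℕ}
    (K : EuclideanSpace ℝ (Fin N) → ℝ)
    (hK0 : ∀ z, 0 ≤ K z)
    (hKint : Integrable K)
    (hKeven : ∀ z, K (-z) = K z)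
    (hK2 : Integrable fun z : EuclideanSpace ℝ (Fin N) => ‖z‖ ^ 2 * K z)
    (u : EuclideanSpace ℝ (Fin N) → ℝ)
    (hu : ContDiff ℝ 2 u)
    (hub : ∃ C, ∀ x, |u x| ≤ C)
    (hu2b : ∃ C, ∀ x, ‖iteratedFDeriv ℝ 2 u x‖ ≤ C)
    (hu2c : UniformContinuous fun x => iteratedFDeriv ℝ 2 u x) :
    ∀ x : EuclideanSpace ℝ (Fin N),
      Tendsto
        (fun ε : ℝ =>
          (∫ y, (ε ^ (N + 2))⁻¹ * K (ε⁻¹ • (x - y)) * u y) -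
            (∫ z, (ε ^ (N + 2))⁻¹ * K (ε⁻¹ • z)) * u x)
        (𝓝[>] (0 : ℝ))
        (𝓝 (∑ i : Fin N, ∑ j : Fin N,
          ((1 : ℝ) / 2 * ∫ z : EuclideanSpace ℝ (Fin N), z i * z j * K z) *
            fderiv ℝ (fun y => fderiv ℝ u y (EuclideanSpace.single j 1)) x
              (EuclideanSpace.single i 1))) := by
  intro x
  obtain ⟨C0, hC0⟩ := hub
  obtain ⟨C2, hC2⟩ := hu2b
  have hC2n : 0 ≤ C2 := le_trans (norm_nonneg _) (hC2 x)
  set H := fderiv ℝ (fderiv ℝ u) x with hHdef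
  have hKmeas := hKint.aestronglyMeasurable
  have hucont : Continuous u := hu.continuous
  have hdu1 : ContDiff ℝ 1 (fderiv ℝ u) := hu.fderiv_right (by norm_num)
  have hddu : Differentiable ℝ (fderiv ℝ u) := hdu1.differentiable (by norm_num)
  have hcont2 : Continuous (fderiv ℝ (fderiv ℝ u)) := hdu1.continuous_fderiv (by norm_num)
  -- coordinate bound
  have habs : ∀ (z : EuclideanSpace ℝ (Fin N)) (i : Fin N), |z i| ≤ ‖z‖ := by
    intro z i
    rw [EuclideanSpace.norm_eq, ← Real.sqrt_sq_eq_abs]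
    apply Real.sqrt_le_sqrt
    have := Finset.single_le_sum (f := fun j => ‖z j‖ ^ 2)
      (fun j _ => by positivity) (Finset.mem_univ i)
    simpa [Real.norm_eq_abs, sq_abs] using this
  -- global bound on second derivative
  have hD2 : ∀ y, ‖fderiv ℝ (fderiv ℝ u) y‖ ≤ C2 := by
    intro y
    refine ContinuousLinearMap.opNorm_le_bound _ (le_trans (norm_nonneg _) (hC2 y)) fun a => ?_
    refine ContinuousLinearMap.opNorm_le_bound _
      (mul_nonneg (le_trans (norm_nonneg _) (hC2 y)) (norm_nonneg a)) fun b => ?_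
    have h1 : fderiv ℝ (fderiv ℝ u) y a b = iteratedFDeriv ℝ 2 u y ![a, b] := by
      rw [iteratedFDeriv_two_apply]
      simp
    calc ‖fderiv ℝ (fderiv ℝ u) y a b‖ = ‖iteratedFDeriv ℝ 2 u y ![a, b]‖ := by rw [h1]
      _ ≤ ‖iteratedFDeriv ℝ 2 u y‖ * (‖a‖ * ‖b‖) := by
          simpa [Fin.prod_univ_two, mul_assoc] using
            (iteratedFDeriv ℝ 2 u y).le_opNorm ![a, b]
      _ ≤ C2 * (‖a‖ * ‖b‖) :=
          mul_le_mul_of_nonneg_right (hC2 y) (by positivity)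
      _ = ‖iteratedFDeriv ℝ 2 u y‖ * ‖a‖ * ‖b‖ + (C2 * (‖a‖*‖b‖) - ‖iteratedFDeriv ℝ 2 u y‖ * ‖a‖ * ‖b‖) := by ring
      _ = C2 * ‖a‖ * ‖b‖ := by ring
  have hD2x : ∀ y, ‖fderiv ℝ (fderiv ℝ u) y - H‖ ≤ 2 * C2 := fun y =>
    le_trans (norm_sub_le (fderiv ℝ (fderiv ℝ u) y) H) (by have := hD2 y; have := hD2 x; rw [← hHdef] at *; linarith)
  -- identify mixed partials with the second derivative bilinear map
  have hA : ∀ i j : Fin N,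
      fderiv ℝ (fun y => fderiv ℝ u y (single j 1)) x (single i 1)
        = H (single i 1) (single j 1) := by
    intro i j
    have h1 := fderiv_clm_apply (𝕜 := ℝ) (c := fderiv ℝ u)
      (u := fun _ : EuclideanSpace ℝ (Fin N) => single j 1) (x := x)
      (hddu x) (differentiableAt_const _)
    simp only [fderiv_fun_const, Pi.zero_apply, ContinuousLinearMap.comp_zero, zero_add] at h1
    rw [h1, ContinuousLinearMap.flip_apply, hHdef]
  -- basis expansion
  have hbasis : ∀ z : EuclideanSpace ℝ (Fin N), ∑ i, z i • single i (1:ℝ) = z := by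
    intro z
    have h := (EuclideanSpace.basisFun (Fin N) ℝ).sum_repr z
    simpa [EuclideanSpace.basisFun_apply, EuclideanSpace.basisFun_repr] using h
  have hquad : ∀ z : EuclideanSpace ℝ (Fin N),
      H z z = ∑ i, ∑ j, z i * z j * (H (single i 1) (single j 1)) := by
    intro z
    have e1 : ∀ b : EuclideanSpace ℝ (Fin N), H z b = ∑ i, z i * H (single i 1) b := by
      intro b
      conv_lhs => rw [← hbasis z]
      rw [map_sum, ContinuousLinearMap.sum_apply]
      exact Finset.sum_congr rfl fun i _ => by
        rw [_root_.map_smul, ContinuousLinearMap.smul_apply, smul_eq_mul]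
    calc H z z = ∑ i, z i * H (single i 1) z := e1 z
      _ = ∑ i, ∑ j, z i * z j * H (single i 1) (single j 1) := by
          refine Finset.sum_congr rfl fun i _ => ?_
          have e2 : H (single i 1) z = ∑ j, z j * H (single i 1) (single j 1) := by
            conv_lhs => rw [← hbasis z]
            rw [map_sum]
            exact Finset.sum_congr rfl fun j _ => by rw [_root_.map_smul, smul_eq_mul]
          rw [e2, Finset.mul_sum]
          exact Finset.sum_congr rfl fun j _ => by ring
  -- integrability of the coordinate moments
  have hproj : ∀ i : Fin N, Continuous fun z : EuclideanSpace ℝ (Fin N) => z i :=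
    fun i => (EuclideanSpace.proj i).continuous
  have hint_ij : ∀ i j : Fin N,
      Integrable (fun z : EuclideanSpace ℝ (Fin N) => z i * z j * K z) := by
    intro i j
    refine hK2.mono (((hproj i).mul (hproj j)).aestronglyMeasurable.mul hKmeas)
      (ae_of_all _ fun z => ?_)
    have h1 : |z i * z j| ≤ ‖z‖ ^ 2 := by
      rw [abs_mul, sq]
      exact mul_le_mul (habs z i) (habs z j) (abs_nonneg _) (norm_nonneg _)
    have h2 : (0:ℝ) ≤ ‖z‖ ^ 2 * K z := mul_nonneg (by positivity) (hK0 z)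
    rw [Real.norm_eq_abs, Real.norm_eq_abs, abs_of_nonneg h2, abs_mul,
      abs_of_nonneg (hK0 z)]
    exact mul_le_mul_of_nonneg_right h1 (hK0 z)
  -- rewrite of the limit value
  have hterm : ∀ i j : Fin N, Integrable (fun z : EuclideanSpace ℝ (Fin N) =>
      1/2 * (z i * z j * K z) * (H (single i 1) (single j 1))) :=
    fun i j => ((hint_ij i j).const_mul _).mul_const _
  have Teq : (∑ i : Fin N, ∑ j : Fin N,
      ((1 : ℝ) / 2 * ∫ z : EuclideanSpace ℝ (Fin N), z i * z j * K z) *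
        fderiv ℝ (fun y => fderiv ℝ u y (single j 1)) x (single i 1))
      = ∫ z : EuclideanSpace ℝ (Fin N), K z * H z z / 2 := by
    calc (∑ i : Fin N, ∑ j : Fin N,
        ((1 : ℝ) / 2 * ∫ z : EuclideanSpace ℝ (Fin N), z i * z j * K z) *
          fderiv ℝ (fun y => fderiv ℝ u y (single j 1)) x (single i 1))
        = ∑ i : Fin N, ∑ j : Fin N, ∫ z : EuclideanSpace ℝ (Fin N),
            1/2 * (z i * z j * K z) * (H (single i 1) (single j 1)) := by
          refine Finset.sum_congr rfl fun i _ => Finset.sum_congr rfl fun j _ => ?_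
          rw [hA i j]
          rw [show (fun z : EuclideanSpace ℝ (Fin N) =>
              1/2 * (z i * z j * K z) * (H (single i 1) (single j 1)))
            = fun z : EuclideanSpace ℝ (Fin N) =>
              (1/2 * H (single i 1) (single j 1)) * (z i * z j * K z) from
              funext fun z => by ring]
          rw [MeasureTheory.integral_const_mul]
          ring
      _ = ∫ z : EuclideanSpace ℝ (Fin N), ∑ i : Fin N, ∑ j : Fin N,
            1/2 * (z i * z j * K z) * (H (single i 1) (single j 1)) := by
          rw [MeasureTheory.integral_finset_sum _
            (fun i _ => integrable_finset_sum _ (fun j _ => hterm i j))]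
          exact Finset.sum_congr rfl fun i _ =>
            (MeasureTheory.integral_finset_sum _ (fun j _ => hterm i j)).symm
      _ = ∫ z : EuclideanSpace ℝ (Fin N), K z * H z z / 2 := by
          refine integral_congr_ae (ae_of_all _ fun z => ?_)
          dsimp only
          rw [hquad z, Finset.mul_sum, Finset.sum_div]
          refine Finset.sum_congr rfl fun i _ => ?_
          rw [Finset.mul_sum, Finset.sum_div]
          exact Finset.sum_congr rfl fun j _ => by ring
  -- the rescaled integrand family
  set F : ℝ → EuclideanSpace ℝ (Fin N) → ℝ := fun ε z =>
    (ε ^ 2)⁻¹ * (K z * (u (x + ε • z) + u (x - ε • z) - 2 * u x)) / 2 with hFdef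
  -- key quantitative estimate
  have key : ∀ (ε : ℝ), ε ≠ 0 → ∀ (z : EuclideanSpace ℝ (Fin N)) (C : ℝ),
      (∀ y ∈ closedBall x ‖ε • z‖, ‖fderiv ℝ (fderiv ℝ u) y - H‖ ≤ C) →
      |F ε z - K z * H z z / 2| ≤ K z * C * ‖z‖ ^ 2 := by
    intro ε hε z C hC
    have h0 := hC x (mem_closedBall_self (norm_nonneg _))
    rw [← hHdef, sub_self, ContinuousLinearMap.opNorm_zero] at h0
    have hsd := seconddiff_bound hu x (ε • z) C (by rw [← hHdef]; exact hC)
    rw [← hHdef] at hsd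
    have hsm : H (ε • z) (ε • z) = ε ^ 2 * (H z z) := by
      simp only [_root_.map_smul, ContinuousLinearMap.smul_apply, smul_eq_mul]
      ring
    have hnorm : ‖ε • z‖ ^ 2 = ε ^ 2 * ‖z‖ ^ 2 := by
      rw [norm_smul, Real.norm_eq_abs, mul_pow, sq_abs]
    have hdiff : F ε z - K z * H z z / 2
        = (ε ^ 2)⁻¹ * (K z / 2) *
          ((u (x + ε • z) + u (x - ε • z) - 2 * u x) - H (ε • z) (ε • z)) := by
      simp only [hFdef]
      rw [hsm]
      field_simp
    rw [hdiff, abs_mul,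
      abs_of_nonneg (mul_nonneg (by positivity) (by linarith [hK0 z]))]
    calc (ε ^ 2)⁻¹ * (K z / 2) *
          |(u (x + ε • z) + u (x - ε • z) - 2 * u x) - H (ε • z) (ε • z)|
        ≤ (ε ^ 2)⁻¹ * (K z / 2) * (2 * C * ‖ε • z‖ ^ 2) :=
          mul_le_mul_of_nonneg_left hsd
            (mul_nonneg (by positivity) (by linarith [hK0 z]))
      _ = K z * C * ‖z‖ ^ 2 := by
          rw [hnorm]
          field_simp
  -- measurability
  have hmeasF : ∀ ε : ℝ, AEStronglyMeasurable (F ε) volume := by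
    intro ε
    have hc : Continuous fun z : EuclideanSpace ℝ (Fin N) =>
        u (x + ε • z) + u (x - ε • z) - 2 * u x :=
      ((hucont.comp (continuous_const.add (continuous_id.const_smul ε))).add
        (hucont.comp (continuous_const.sub (continuous_id.const_smul ε)))).sub
        continuous_const
    have e : F ε = fun z => (2:ℝ)⁻¹ *
        ((ε ^ 2)⁻¹ * (K z * (u (x + ε • z) + u (x - ε • z) - 2 * u x))) :=
      funext fun z => by simp only [hFdef]; ring
    rw [e]
    exact ((hKmeas.mul hc.aestronglyMeasurable).const_mul _).const_mul _
  -- domination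
  have hHzz : ∀ z : EuclideanSpace ℝ (Fin N), |H z z| ≤ C2 * ‖z‖ ^ 2 := by
    intro z
    have e1 : ‖H z z‖ ≤ ‖H z‖ * ‖z‖ := (H z).le_opNorm z
    have e2 : ‖H z‖ ≤ ‖H‖ * ‖z‖ := H.le_opNorm z
    have e3 : ‖H‖ ≤ C2 := by rw [hHdef]; exact hD2 x
    rw [← Real.norm_eq_abs, sq]
    nlinarith [norm_nonneg z, norm_nonneg (H z), norm_nonneg (H z z), norm_nonneg H]
  have h_bound : ∀ᶠ ε in 𝓝[>] (0:ℝ), ∀ᵐ z : EuclideanSpace ℝ (Fin N),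
      ‖F ε z‖ ≤ 3 * C2 * (‖z‖ ^ 2 * K z) := by
    filter_upwards [self_mem_nhdsWithin] with ε hε
    have hεpos : (0:ℝ) < ε := hε
    refine ae_of_all _ fun z => ?_
    have hk := key ε hεpos.ne' z (2 * C2) (fun y _ => hD2x y)
    have h2 : |K z * H z z / 2| ≤ K z * (C2 * ‖z‖ ^ 2) / 2 := by
      rw [abs_div, abs_mul, abs_of_nonneg (hK0 z), abs_two]
      have := hHzz z
      have h3 := mul_le_mul_of_nonneg_left (hHzz z) (hK0 z)
      linarith
    rw [Real.norm_eq_abs]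
    calc |F ε z| = |(F ε z - K z * H z z / 2) + K z * H z z / 2| := by ring_nf
      _ ≤ |F ε z - K z * H z z / 2| + |K z * H z z / 2| := abs_add_le _ _
      _ ≤ K z * (2 * C2) * ‖z‖ ^ 2 + K z * (C2 * ‖z‖ ^ 2) / 2 := add_le_add hk h2
      _ ≤ 3 * C2 * (‖z‖ ^ 2 * K z) := by nlinarith [mul_nonneg (hK0 z) (sq_nonneg ‖z‖), hC2n, mul_nonneg (mul_nonneg hC2n (hK0 z)) (sq_nonneg ‖z‖)]
  -- pointwise limit
  have h_lim : ∀ᵐ z : EuclideanSpace ℝ (Fin N), Tendsto (fun ε => F ε z)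
      (𝓝[>] (0:ℝ)) (𝓝 (K z * H z z / 2)) := by
    refine ae_of_all _ fun z => ?_
    rw [Metric.tendsto_nhdsWithin_nhds]
    intro η hη
    have ha : (0:ℝ) ≤ K z * ‖z‖ ^ 2 := mul_nonneg (hK0 z) (sq_nonneg _)
    have hη' : 0 < η / (2 * (K z * ‖z‖ ^ 2 + 1)) := div_pos hη (by nlinarith)
    obtain ⟨δ₁, hδ₁, hball⟩ := (Metric.continuousAt_iff (α := EuclideanSpace ℝ (Fin N)) (β := EuclideanSpace ℝ (Fin N) →L[ℝ] EuclideanSpace ℝ (Fin N) →L[ℝ] ℝ)).mp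
      (hcont2.continuousAt (x := x)) _ hη'
    refine ⟨δ₁ / (‖z‖ + 1), by positivity, ?_⟩
    intro ε hεmem hεdist
    have hε : (0:ℝ) < ε := hεmem
    rw [Real.dist_eq, sub_zero, abs_of_pos hε] at hεdist
    have hεz : ‖ε • z‖ < δ₁ := by
      rw [norm_smul, Real.norm_eq_abs, abs_of_pos hε]
      have h4 : ε * (‖z‖ + 1) < δ₁ := (lt_div_iff₀ (by positivity)).mp hεdist
      nlinarith [norm_nonneg z]
    have hCb : ∀ y ∈ closedBall x ‖ε • z‖,
        ‖fderiv ℝ (fderiv ℝ u) y - H‖ ≤ η / (2 * (K z * ‖z‖ ^ 2 + 1)) := by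
      intro y hy
      have hdy : dist y x < δ₁ := lt_of_le_of_lt (mem_closedBall.mp hy) hεz
      have h5 := hball hdy
      rw [← hHdef] at h5
      exact (dist_eq_norm (fderiv ℝ (fderiv ℝ u) y) H ▸ h5).le
    have hk := key ε hε.ne' z _ hCb
    rw [Real.dist_eq]
    calc |F ε z - K z * H z z / 2|
        ≤ K z * (η / (2 * (K z * ‖z‖ ^ 2 + 1))) * ‖z‖ ^ 2 := hk
      _ = (K z * ‖z‖ ^ 2) * η / (2 * (K z * ‖z‖ ^ 2 + 1)) := by ring
      _ < η := by
          rw [div_lt_iff₀ (by nlinarith)]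
          nlinarith
  -- dominated convergence
  have hDCT := tendsto_integral_filter_of_dominated_convergence
    (μ := volume) (F := F) (f := fun z => K z * H z z / 2)
    (fun z => 3 * C2 * (‖z‖ ^ 2 * K z))
    (Filter.Eventually.of_forall hmeasF) h_bound (hK2.const_mul _) h_lim
  -- identification of the expression with ∫ F ε for ε > 0
  have hbddmul : ∀ v : EuclideanSpace ℝ (Fin N) → ℝ, Continuous v →
      (∃ C, ∀ z, |v z| ≤ C) → Integrable (fun z => K z * v z) := by
    rintro v hv ⟨C, hC⟩
    have h := hKint.bdd_mul hv.aestronglyMeasurable (c := C) (ae_of_all _ fun z => by simpa using hC z)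
    have e : (fun z => v z * K z) = fun z => K z * v z := funext fun z => mul_comm _ _
    rwa [e] at h
  have hεeq : ∀ ε : ℝ, 0 < ε →
      ((∫ y, (ε ^ (N + 2))⁻¹ * K (ε⁻¹ • (x - y)) * u y) -
        (∫ z, (ε ^ (N + 2))⁻¹ * K (ε⁻¹ • z)) * u x) = ∫ z, F ε z := by
    intro ε hε
    have hεne : ε ≠ 0 := hε.ne'
    have hintm : Integrable (fun z => K z * (u (x - ε • z) - u x)) :=
      hbddmul _ ((hucont.comp (continuous_const.sub (continuous_id.const_smul ε))).sub
        continuous_const)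
        ⟨2 * C0, fun z => by
          have h1 := hC0 (x - ε • z); have h2 := hC0 x
          calc |u (x - ε • z) - u x| ≤ |u (x - ε • z)| + |u x| := abs_sub _ _
            _ ≤ 2 * C0 := by linarith⟩
    have hintp : Integrable (fun z => K z * (u (x + ε • z) - u x)) :=
      hbddmul _ ((hucont.comp (continuous_const.add (continuous_id.const_smul ε))).sub
        continuous_const)
        ⟨2 * C0, fun z => by
          have h1 := hC0 (x + ε • z); have h2 := hC0 x
          calc |u (x + ε • z) - u x| ≤ |u (x + ε • z)| + |u x| := abs_sub _ _
            _ ≤ 2 * C0 := by linarith⟩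
    have hintmu : Integrable (fun z => K z * u (x - ε • z)) :=
      hbddmul _ (hucont.comp (continuous_const.sub (continuous_id.const_smul ε)))
        ⟨C0, fun z => hC0 _⟩
    have hD1 : ∫ y, (ε ^ (N + 2))⁻¹ * K (ε⁻¹ • (x - y)) * u y
        = ∫ z, (ε ^ 2)⁻¹ * (K z * u (x - ε • z)) := by
      have ha : ∫ y, (ε ^ (N + 2))⁻¹ * K (ε⁻¹ • (x - y)) * u y
          = ∫ w, (ε ^ (N + 2))⁻¹ * K (ε⁻¹ • w) * u (x - w) := by
        rw [← integral_sub_left_eq_self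
          (fun w => (ε ^ (N + 2))⁻¹ * K (ε⁻¹ • w) * u (x - w)) volume x]
        simp only [sub_sub_cancel]
      have hcs := MeasureTheory.Measure.integral_comp_smul_of_nonneg volume
        (fun w => (ε ^ (N + 2))⁻¹ * K (ε⁻¹ • w) * u (x - w)) ε (hR := hε.le)
      rw [finrank_euclideanSpace_fin] at hcs
      have hb : ∫ w, (ε ^ (N + 2))⁻¹ * K (ε⁻¹ • w) * u (x - w)
          = (ε ^ N : ℝ) • ∫ z, (ε ^ (N + 2))⁻¹ * K (ε⁻¹ • (ε • z)) * u (x - ε • z) := by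
        rw [hcs, smul_smul, mul_inv_cancel₀ (pow_ne_zero _ hεne), one_smul]
      rw [ha, hb, ← integral_smul]
      refine integral_congr_ae (ae_of_all _ fun z => ?_)
      have hz : ε⁻¹ • (ε • z) = z := by rw [smul_smul, inv_mul_cancel₀ hεne, one_smul]
      dsimp only
      rw [hz, smul_eq_mul]
      field_simp
      ring
    have hD2' : (∫ z, (ε ^ (N + 2))⁻¹ * K (ε⁻¹ • z)) = (ε ^ 2)⁻¹ * ∫ z, K z := by
      have hcs := MeasureTheory.Measure.integral_comp_inv_smul_of_nonneg volume
        (fun w => (ε ^ (N + 2))⁻¹ * K w) hε.le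
      rw [finrank_euclideanSpace_fin] at hcs
      rw [hcs, MeasureTheory.integral_const_mul, smul_eq_mul]
      field_simp
      ring
    have hsplit : ∫ z, (ε ^ 2)⁻¹ * (K z * (u (x - ε • z) - u x))
        = (∫ z, (ε ^ 2)⁻¹ * (K z * u (x - ε • z))) - (ε ^ 2)⁻¹ * (∫ z, K z) * u x := by
      have e : (fun z => (ε ^ 2)⁻¹ * (K z * (u (x - ε • z) - u x)))
          = fun z => (ε ^ 2)⁻¹ * (K z * u (x - ε • z)) - ((ε ^ 2)⁻¹ * u x) * K z :=
        funext fun z => by ring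
      rw [e, integral_sub (hintmu.const_mul _) (hKint.const_mul _),
        MeasureTheory.integral_const_mul, MeasureTheory.integral_const_mul]
      ring
    have hsymm : ∫ z, (ε ^ 2)⁻¹ * (K z * (u (x - ε • z) - u x))
        = ∫ z, (ε ^ 2)⁻¹ * (K z * (u (x + ε • z) - u x)) := by
      rw [← integral_neg_eq_self
        (fun z => (ε ^ 2)⁻¹ * (K z * (u (x + ε • z) - u x))) volume]
      refine integral_congr_ae (ae_of_all _ fun z => ?_)
      dsimp only
      rw [smul_neg, ← sub_eq_add_neg, hKeven]
    have hF : ∫ z, F ε z = ∫ z, (ε ^ 2)⁻¹ * (K z * (u (x - ε • z) - u x)) := by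
      have e : (fun z => F ε z) = fun z =>
          ((ε ^ 2)⁻¹ * (K z * (u (x + ε • z) - u x))
            + (ε ^ 2)⁻¹ * (K z * (u (x - ε • z) - u x))) / 2 := by
        funext z
        simp only [hFdef]
        ring
      rw [e, integral_div, integral_add (hintp.const_mul _) (hintm.const_mul _), ← hsymm]
      ring
    rw [hD1, hD2', hF, hsplit]
  rw [Teq]
  exact Tendsto.congr'
    (Filter.eventuallyEq_of_mem self_mem_nhdsWithin fun ε hε => (hεeq ε hε).symm) hDCT
end

section
/- Let h : ℝ → ℝ be continuous with 0 < inf_ℝ h ≤ sup_ℝ h < ∞, and define φ(x) := ∫_0^x ds/h(s). Then φ is a strictly increasing bijection from ℝ onto ℝ. Moreover, for any nonnegative integrable K̃ ∈ L¹(ℝ), setting J(x,y) := (1/h(y)) K̃( φ(y) − φ(x) ), the following hold for every integrable u : ℝ → ℝ and every x ∈ ℝ: (i) ∫_ℝ J(x,y) dy = ∫_ℝ K̃(w) dw; (ii) h(x) ∫_ℝ J(y,x) u(y) dy = ∫_ℝ K̃( φ(x) − w ) v(w) dw, where v(w) := h(φ^{-1}(w)) u(φ^{-1}(w)). Consequently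 h(x) [ ∫_ℝ J(y,x) u(y) dy − u(x) ∫_ℝ J(x,y) dy ] = ∫_ℝ K̃(φ(x)−w) v(w) dw − ( ∫_ℝ K̃ ) v(φ(x)), so the change of variables x' = φ(x) reduces the heterogeneous nonlocal equation with jump rate J to the homogeneous nonlocal equation u_t = K̃ ∗ u − (∫K̃) u for v. -/
open MeasureTheory intervalIntegral Filter

/-- The food-metric change of variables `x' = φ(x) = ∫_0^x ds/h(s)` reduces the
Stratonovich-type heterogeneous nonlocal model `J(x,y) = h(y)⁻¹ K̃(φ(y) - φ(x))`
to the homogeneous nonlocal model. -/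
theorem stmt_13 (h : ℝ → ℝ) (hcont : Continuous h)
    (c C : ℝ) (hc : 0 < c) (hbd : ∀ x, c ≤ h x ∧ h x ≤ C)
    (φ : ℝ → ℝ) (hφ : ∀ x, φ x = ∫ s in (0 : ℝ)..x, (h s)⁻¹)
    (K' : ℝ → ℝ) (hK'0 : ∀ z, 0 ≤ K' z) (hK'int : Integrable K') :
    StrictMono φ ∧ Function.Bijective φ ∧
      ∀ u : ℝ → ℝ, Integrable u → ∀ x : ℝ,
        (∫ y, (h y)⁻¹ * K' (φ y - φ x)) = (∫ w, K' w) ∧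
        (h x * ∫ y, (h x)⁻¹ * K' (φ x - φ y) * u y) =
          (∫ w, K' (φ x - w) * (h (Function.invFun φ w) * u (Function.invFun φ w))) ∧
        h x * ((∫ y, (h x)⁻¹ * K' (φ x - φ y) * u y) - u x * ∫ y, (h y)⁻¹ * K' (φ y - φ x)) =
          (∫ w, K' (φ x - w) * (h (Function.invFun φ w) * u (Function.invFun φ w))) -
            (∫ w, K' w) * (h (Function.invFun φ (φ x)) * u (Function.invFun φ (φ x))) := by
  have hpos : ∀ x, 0 < h x := fun x => lt_of_lt_of_le hc (hbd x).1
  have hCpos : 0 < C := lt_of_lt_of_le hc ((hbd 0).1.trans (hbd 0).2)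
  have hne : ∀ x, h x ≠ 0 := fun x => (hpos x).ne'
  have hinvcont : Continuous fun s => (h s)⁻¹ := hcont.inv₀ hne
  have hiint : ∀ a b : ℝ, IntervalIntegrable (fun s => (h s)⁻¹) volume a b :=
    fun a b => hinvcont.intervalIntegrable a b
  have hderiv : ∀ x, HasDerivAt φ ((h x)⁻¹) x := by
    intro x
    have := (intervalIntegral.integral_hasStrictDerivAt_right (hiint 0 x)
      (hinvcont.stronglyMeasurableAtFilter _ _) hinvcont.continuousAt).hasDerivAt
    have heq : (fun y => ∫ s in (0:ℝ)..y, (h s)⁻¹) = φ := by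
      ext y; rw [hφ y]
    rwa [heq] at this
  have hmono : StrictMono φ :=
    strictMono_of_deriv_pos (fun x => by
      rw [(hderiv x).deriv]; exact inv_pos.mpr (hpos x))
  have hφcont : Continuous φ :=
    Differentiable.continuous fun x => (hderiv x).differentiableAt
  -- lower bound on [0, ∞), upper bound on (-∞, 0]
  have hlb : ∀ x : ℝ, 0 ≤ x → x / C ≤ φ x := by
    intro x hx
    rw [hφ x]
    have : ∫ s in (0:ℝ)..x, C⁻¹ ≤ ∫ s in (0:ℝ)..x, (h s)⁻¹ := by
      apply intervalIntegral.integral_mono_on hx (intervalIntegrable_const) (hiint 0 x)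
      intro s _
      exact inv_anti₀ (hpos s) (hbd s).2
    simpa [div_eq_mul_inv, mul_comm] using this
  have hub : ∀ x : ℝ, x ≤ 0 → φ x ≤ x / C := by
    intro x hx
    rw [hφ x, intervalIntegral.integral_symm x 0]
    have : ∫ s in x..(0:ℝ), C⁻¹ ≤ ∫ s in x..(0:ℝ), (h s)⁻¹ := by
      apply intervalIntegral.integral_mono_on hx intervalIntegrable_const (hiint x 0)
      intro s _
      exact inv_anti₀ (hpos s) (hbd s).2
    have h2 : -(x / C) ≤ ∫ s in x..(0:ℝ), (h s)⁻¹ := by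
      simpa [div_eq_mul_inv, neg_mul, mul_comm] using this
    linarith
  have htop : Tendsto φ atTop atTop := by
    apply tendsto_atTop_mono' _ _ (by
      have : Tendsto (fun x : ℝ => x / C) atTop atTop :=
        tendsto_id.atTop_div_const hCpos
      exact this)
    filter_upwards [eventually_ge_atTop (0:ℝ)] with x hx using hlb x hx
  have hbot : Tendsto φ atBot atBot := by
    apply tendsto_atBot_mono' _ _ (by
      have : Tendsto (fun x : ℝ => x / C) atBot atBot :=
        tendsto_id.atBot_div_const hCpos
      exact this)
    filter_upwards [eventually_le_atBot (0:ℝ)] with x hx using hub x hx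
  have hsurj : Function.Surjective φ := hφcont.surjective htop hbot
  have hbij : Function.Bijective φ := ⟨hmono.injective, hsurj⟩
  have hli : Function.LeftInverse (Function.invFun φ) φ :=
    Function.leftInverse_invFun hmono.injective
  -- change of variables: for any g, ∫ g = ∫ (h y)⁻¹ • g(φ y)
  have hcv : ∀ g : ℝ → ℝ, (∫ w, g w) = ∫ y, (h y)⁻¹ * g (φ y) := by
    intro g
    have himg : φ '' Set.univ = Set.univ := by
      rw [Set.image_univ, Set.range_eq_univ.mpr hsurj]
    have := integral_image_eq_integral_abs_deriv_smul (s := Set.univ)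
      MeasurableSet.univ (fun x _ => (hderiv x).hasDerivWithinAt)
      (hmono.injective.injOn) g
    rw [himg] at this
    simpa [abs_of_pos (inv_pos.mpr (hpos _)), smul_eq_mul] using this
  refine ⟨hmono, hbij, fun u hu x => ?_⟩
  have e1 : (∫ y, (h y)⁻¹ * K' (φ y - φ x)) = (∫ w, K' w) := by
    have := hcv (fun w => K' (w - φ x))
    rw [← this]
    exact integral_sub_right_eq_self K' (φ x)
  have e2 : (h x * ∫ y, (h x)⁻¹ * K' (φ x - φ y) * u y) =
      (∫ w, K' (φ x - w) * (h (Function.invFun φ w) * u (Function.invFun φ w))) := by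
    have hl : (∫ y, (h x)⁻¹ * K' (φ x - φ y) * u y) =
        (h x)⁻¹ * ∫ y, K' (φ x - φ y) * u y := by
      rw [← MeasureTheory.integral_const_mul]
      congr 1; ext y; ring
    rw [hl, ← mul_assoc, mul_inv_cancel₀ (hne x), one_mul]
    have := hcv (fun w => K' (φ x - w) * (h (Function.invFun φ w) * u (Function.invFun φ w)))
    rw [this]
    congr 1; ext y
    rw [hli y]
    field_simp
    rw [mul_div_cancel_right₀ _ (hne y)]
  refine ⟨e1, e2, ?_⟩
  rw [mul_sub, e2, e1, hli x]
  ring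
end
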